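/- For every x ∈ ℝ there exist a constant M > 0 and an index N such that for all n ≥ N, |F(a_n x + b_n)^n − Λ(x)| ≤ M Λ(x) / log n. Equivalently, F^n(a_n x + b_n) = Λ(x)(1 + O(1/b_n^τ)) = Λ(x)(1 + O(1/log n)). -/

import Mathlib

open Filter Set

set_option maxHeartbeats 1000000 in
/-- Theorem 1.1: for a generalized Weibull distribution `F(x) = 1 - K x^α exp(-C x^τ)`
(for `x ≥ x₁`), with centering `b_n` solving `K b^α exp(-C b^τ) = 1/n` and scaling
`a_n = 1/(C τ b_n^{τ-1} - α/b_n)`, one has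
`F(a_n x + b_n)^n = Λ(x)(1 + O(1/log n))`, where `Λ(x) = exp(-e^{-x})` is the
Gumbel distribution function. -/
theorem stmt_1 (K C α τ x₁ : ℝ) (hK : 0 < K) (hC : 0 < C) (hα : 0 < α) (hτ : 1 ≤ τ)
    (hx₁ : 0 < x₁)
    (hanti : StrictAntiOn (fun x : ℝ => K * x ^ α * Real.exp (-C * x ^ τ)) (Set.Ici x₁))
    (hlim : Tendsto (fun x : ℝ => K * x ^ α * Real.exp (-C * x ^ τ)) atTop (nhds 0))
    (hrange : ∀ x ≥ x₁, K * x ^ α * Real.exp (-C * x ^ τ) ∈ Set.Ioc (0 : ℝ) 1)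
    (F : ℝ → ℝ) (hF : ∀ x ≥ x₁, F x = 1 - K * x ^ α * Real.exp (-C * x ^ τ))
    (b : ℕ → ℝ)
    (hb : ∀ᶠ n : ℕ in atTop,
      x₁ ≤ b n ∧ K * b n ^ α * Real.exp (-C * b n ^ τ) = 1 / (n : ℝ))
    (a : ℕ → ℝ) (ha : ∀ n, a n = 1 / (C * τ * b n ^ (τ - 1) - α / b n)) :
    ∀ x : ℝ, ∃ M > (0 : ℝ), ∃ N : ℕ, ∀ n ≥ N,
      |F (a n * x + b n) ^ n - Real.exp (-Real.exp (-x))|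
        ≤ M * Real.exp (-Real.exp (-x)) / Real.log n := by
  intro x
  have hτ0 : (0:ℝ) < τ := lt_of_lt_of_le one_pos hτ
  -- b tends to infinity
  have hbtop : Tendsto b atTop atTop := by
    rw [tendsto_atTop]
    intro B
    set B₀ : ℝ := max B x₁ with hB₀
    have hB₀x : x₁ ≤ B₀ := le_max_right _ _
    have hgB₀ : 0 < K * B₀ ^ α * Real.exp (-C * B₀ ^ τ) := (hrange B₀ hB₀x).1
    have hsmall : ∀ᶠ n : ℕ in atTop, 1 / (n:ℝ) < K * B₀ ^ α * Real.exp (-C * B₀ ^ τ) := by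
      have : Tendsto (fun n : ℕ => 1 / (n:ℝ)) atTop (nhds 0) := tendsto_one_div_atTop_nhds_zero_nat
      exact this.eventually_lt_const hgB₀
    filter_upwards [hb, hsmall] with n hbn hs
    by_contra hlt
    push_neg at hlt
    have hbnB : b n < B₀ := lt_of_lt_of_le hlt (le_max_left _ _)
    have := hanti (mem_Ici.2 hbn.1) (mem_Ici.2 hB₀x) hbnB
    simp only at this
    rw [hbn.2] at this
    exact absurd (hs.trans this) (lt_irrefl _)
  have hbτtop : Tendsto (fun n => b n ^ τ) atTop atTop :=
    (tendsto_rpow_atTop hτ0).comp hbtop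
  have hlogtop : Tendsto (fun n : ℕ => Real.log n) atTop atTop :=
    Real.tendsto_log_atTop.comp tendsto_natCast_atTop_atTop
  -- constants
  obtain ⟨c, hc_def⟩ : ∃ c : ℝ, c = 2 * |x| / (C * τ) := ⟨_, rfl⟩
  have hc0 : 0 ≤ c := by rw [hc_def]; positivity
  obtain ⟨A, hA_def⟩ : ∃ A : ℝ, A = (2 * α + C * (4 * τ ^ 2 + 2 * τ)) * c ^ 2 := ⟨_, rfl⟩
  have hA0 : 0 ≤ A := by rw [hA_def]; positivity
  obtain ⟨B, hB_def⟩ : ∃ B : ℝ, B = 2 * Real.exp (2 + 2 * |x|) + 2 * Real.exp (-x) * A * C := ⟨_, rfl⟩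
  have hB0 : 0 < B := by rw [hB_def]; positivity
  refine ⟨2 * B, by linarith, ?_⟩
  obtain ⟨R, hR_def⟩ : ∃ R : ℝ, R = 1 + A + 2 * α / (C * τ) + 2 * c + 2 * τ * c := ⟨_, rfl⟩
  -- eventual facts
  have E1 : ∀ᶠ n : ℕ in atTop, max (2 * x₁ + 2) (Real.exp (-Real.log K / α)) ≤ b n :=
    hbtop.eventually_ge_atTop _
  have E2 : ∀ᶠ n : ℕ in atTop, R ≤ b n ^ τ := hbτtop.eventually_ge_atTop _
  have E3 : ∀ᶠ n : ℕ in atTop, max 1 (B + 1) ≤ Real.log n := hlogtop.eventually_ge_atTop _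
  have E4 : ∀ᶠ n : ℕ in atTop, 2 * Real.exp (1 + |x|) ≤ (n : ℝ) :=
    tendsto_natCast_atTop_atTop.eventually_ge_atTop _
  rw [← eventually_atTop]
  filter_upwards [hb, E1, E2, E3, E4] with n hbn hE1 hE2 hE3 hE4
  obtain ⟨hbx₁, heq⟩ := hbn
  -- basic positivity
  have hb0 : 0 < b n := lt_of_lt_of_le hx₁ hbx₁
  have hb2x : 2 * x₁ + 2 ≤ b n := le_trans (le_max_left _ _) hE1
  have hb1 : 1 ≤ b n := by linarith
  have hn2 : 2 ≤ (n : ℝ) := by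
    have : (2:ℝ) ≤ 2 * Real.exp (1 + |x|) := by nlinarith [Real.one_le_exp (by positivity : (0:ℝ) ≤ 1 + |x|)]
    linarith
  have hn0 : (0:ℝ) < n := by linarith
  have hlogn1 : 1 ≤ Real.log n := le_trans (le_max_left _ _) hE3
  have hlognB : B + 1 ≤ Real.log n := le_trans (le_max_right _ _) hE3
  have hlogn0 : 0 < Real.log n := by linarith
  have hbτpos : 0 < b n ^ τ := Real.rpow_pos_of_pos hb0 τ
  -- unpack E2
  have hcτ0 : 0 ≤ 2 * α / (C * τ) := by positivity
  have hτc0 : 0 ≤ 2 * τ * c := by positivity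
  have hbτ1 : 1 ≤ b n ^ τ := by linarith [hE2, hR_def, hc0, hA0, hcτ0, hτc0]
  have hbτA : A ≤ b n ^ τ := by linarith [hE2, hR_def, hc0, hA0, hcτ0, hτc0]
  have hbτα : 2 * α / (C * τ) ≤ b n ^ τ := by linarith [hE2, hR_def, hc0, hA0, hcτ0, hτc0]
  have hbτc : 2 * c ≤ b n ^ τ := by linarith [hE2, hR_def, hc0, hA0, hcτ0, hτc0]
  have hbττc : 2 * τ * c ≤ b n ^ τ := by linarith [hE2, hR_def, hc0, hA0, hcτ0, hτc0]
  -- log of the defining equation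
  have hlogeq : Real.log K + α * Real.log (b n) - C * b n ^ τ = -Real.log n := by
    have h := congrArg Real.log heq
    rw [Real.log_mul (by positivity) (Real.exp_ne_zero _),
      Real.log_mul (ne_of_gt hK) (by positivity), Real.log_rpow hb0, Real.log_exp,
      one_div, Real.log_inv] at h
    linarith
  have hαlogK : -Real.log K ≤ α * Real.log (b n) := by
    have h1 : Real.exp (-Real.log K / α) ≤ b n := le_trans (le_max_right _ _) hE1
    have h2 : -Real.log K / α ≤ Real.log (b n) := (Real.le_log_iff_exp_le hb0).2 h1
    calc -Real.log K = α * (-Real.log K / α) := by field_simp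
    _ ≤ α * Real.log (b n) := mul_le_mul_of_nonneg_left h2 hα.le
  have hloglebτ : Real.log n ≤ C * b n ^ τ := by linarith
  have hinvbτ : 1 / b n ^ τ ≤ C / Real.log n := by
    rw [div_le_div_iff₀ hbτpos hlogn0]; linarith
  -- the scaling
  obtain ⟨D, hD_def⟩ : ∃ D : ℝ, D = C * τ * b n ^ τ - α := ⟨_, rfl⟩
  have hαD : 2 * α ≤ C * τ * b n ^ τ := by
    have h := (div_le_iff₀ (by positivity : (0:ℝ) < C * τ)).1 hbτα
    linarith [h]
  have hD2 : C * τ * b n ^ τ / 2 ≤ D := by rw [hD_def]; linarith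
  have hCτbτ : 0 < C * τ * b n ^ τ := mul_pos (mul_pos hC hτ0) hbτpos
  have hDpos : 0 < D := by linarith
  have ha_eq : a n = b n / D := by
    rw [ha n]
    have h1 : C * τ * b n ^ (τ - 1) - α / b n = D / b n := by
      rw [Real.rpow_sub hb0, Real.rpow_one, hD_def]; field_simp
    rw [h1, one_div_div]
  obtain ⟨t, ht_def⟩ : ∃ t : ℝ, t = x / D := ⟨_, rfl⟩
  have ht_abs : |t| ≤ c / b n ^ τ := by
    rw [ht_def, abs_div, abs_of_pos hDpos, div_le_div_iff₀ hDpos hbτpos]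
    have h1 : c * (C * τ * b n ^ τ / 2) = |x| * b n ^ τ := by
      rw [hc_def]; field_simp
    have h2 := mul_le_mul_of_nonneg_left hD2 hc0
    linarith [h1, h2]
  have htc : |t| ≤ c := le_trans ht_abs (div_le_self hc0 hbτ1)
  have ht_half : |t| ≤ 1 / 2 := by
    refine le_trans ht_abs ?_
    rw [div_le_div_iff₀ hbτpos two_pos]; linarith
  have ht_2τ : |t| ≤ 1 / (2 * τ) := by
    refine le_trans ht_abs ?_
    rw [div_le_div_iff₀ hbτpos (by positivity : (0:ℝ) < 2 * τ)]; linarith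
  have h1t : (0:ℝ) < 1 + t := by
    have := abs_le.1 ht_half; linarith [this.1]
  obtain ⟨L, hL_def⟩ : ∃ L : ℝ, L = Real.log (1 + t) := ⟨_, rfl⟩
  have ht1 : |t| < 1 := lt_of_le_of_lt ht_half (by norm_num)
  -- |log(1+t) - t| ≤ 2 t^2
  have hLsub : |L - t| ≤ 2 * t ^ 2 := by
    have h := Real.abs_log_sub_add_sum_range_le (x := -t) (by rwa [abs_neg]) 1
    have hsum : (∑ i ∈ Finset.range 1, (-t) ^ (i + 1) / ((i : ℝ) + 1)) = -t := by
      rw [Finset.sum_range_one]; norm_num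
    rw [hsum, abs_neg, show (1 : ℝ) - -t = 1 + t by ring] at h
    have h' : |L - t| ≤ |t| ^ 2 / (1 - |t|) := by
      rw [hL_def, abs_sub_comm, show t - Real.log (1 + t) = -(-t + Real.log (1 + t)) by ring,
        abs_neg]
      exact h
    refine h'.trans ?_
    rw [div_le_iff₀ (by linarith : (0:ℝ) < 1 - |t|), sq_abs]
    have h2 := mul_le_mul_of_nonneg_left ht_half (sq_nonneg t)
    have h3 : t ^ 2 * |t| = |t| * t ^ 2 := by ring
    linarith [h2, h3]
  have hLabs : |L| ≤ 2 * |t| := by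
    have h1 : |L| ≤ |L - t| + |t| := by
      calc |L| = |(L - t) + t| := by ring_nf
      _ ≤ |L - t| + |t| := abs_add_le _ _
    have h2 : 2 * t ^ 2 ≤ |t| := by
      have h3 := mul_le_mul_of_nonneg_left ht_half (abs_nonneg t)
      have h4 : |t| * |t| = t ^ 2 := by rw [← sq_abs t]; ring
      linarith
    linarith
  have hP_eq : (1 + t) ^ τ = Real.exp (τ * L) := by
    rw [Real.rpow_def_of_pos h1t, hL_def, mul_comm]
  have hτL1 : |τ * L| ≤ 1 := by
    rw [abs_mul, abs_of_pos hτ0]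
    have h1 : τ * |L| ≤ τ * (2 * |t|) := mul_le_mul_of_nonneg_left hLabs hτ0.le
    have h2 : 2 * τ * |t| ≤ 2 * τ * (1 / (2 * τ)) :=
      mul_le_mul_of_nonneg_left ht_2τ (by positivity)
    have h3 : 2 * τ * (1 / (2 * τ)) = 1 := by field_simp
    linarith
  have hexpL : |Real.exp (τ * L) - 1 - τ * L| ≤ (τ * L) ^ 2 :=
    Real.abs_exp_sub_one_sub_id_le hτL1
  have hL2 : L ^ 2 ≤ 4 * t ^ 2 := by
    have h1 := mul_self_le_mul_self (abs_nonneg L) hLabs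
    have h2 := sq_abs L
    have h3 := sq_abs t
    have h4 : 2 * |t| * (2 * |t|) = 4 * |t| ^ 2 := by ring
    have h5 : |L| * |L| = |L| ^ 2 := by ring
    linarith
  have hPbound : |(1 + t) ^ τ - 1 - τ * t| ≤ (4 * τ ^ 2 + 2 * τ) * t ^ 2 := by
    have h1 : (1 + t) ^ τ - 1 - τ * t
        = (Real.exp (τ * L) - 1 - τ * L) + τ * (L - t) := by rw [hP_eq]; ring
    calc |(1 + t) ^ τ - 1 - τ * t|
        ≤ |Real.exp (τ * L) - 1 - τ * L| + |τ * (L - t)| := by rw [h1]; exact abs_add_le _ _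
    _ ≤ (τ * L) ^ 2 + τ * (2 * t ^ 2) := by
        refine add_le_add hexpL ?_
        rw [abs_mul, abs_of_pos hτ0]
        exact mul_le_mul_of_nonneg_left hLsub hτ0.le
    _ ≤ (4 * τ ^ 2 + 2 * τ) * t ^ 2 := by
        have h2 : (τ * L) ^ 2 = τ ^ 2 * L ^ 2 := by ring
        have h3 := mul_le_mul_of_nonneg_left hL2 (sq_nonneg τ)
        linarith
  have hx_eq : t * D = x := by rw [ht_def]; field_simp
  obtain ⟨ε, hε_def⟩ : ∃ ε : ℝ, ε = α * L - C * b n ^ τ * ((1 + t) ^ τ - 1) + x := ⟨_, rfl⟩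
  have hε2 : ε = α * (L - t) - C * b n ^ τ * ((1 + t) ^ τ - 1 - τ * t) := by
    rw [hε_def, ← hx_eq, hD_def]; ring
  have ht2a : t ^ 2 ≤ c / b n ^ τ * c := by
    have h1 := mul_le_mul ht_abs htc (abs_nonneg t) (div_nonneg hc0 hbτpos.le)
    have h2 : |t| * |t| = t ^ 2 := by rw [← sq_abs t]; ring
    linarith
  have htb : b n ^ τ * t ^ 2 ≤ c * (c / b n ^ τ) := by
    have hbt : |t| * b n ^ τ ≤ c := (le_div_iff₀ hbτpos).1 ht_abs
    have h1 : b n ^ τ * t ^ 2 = (|t| * b n ^ τ) * |t| := by rw [← sq_abs t]; ring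
    rw [h1]
    exact mul_le_mul hbt ht_abs (abs_nonneg t) hc0
  have hAc : A / b n ^ τ = 2 * α * (c / b n ^ τ * c) + C * (4 * τ ^ 2 + 2 * τ) * (c * (c / b n ^ τ)) := by
    rw [hA_def]; field_simp
  have hεbound : |ε| ≤ A / b n ^ τ := by
    have hCb0 : (0:ℝ) ≤ C * b n ^ τ := by positivity
    calc |ε| = |α * (L - t) - C * b n ^ τ * ((1 + t) ^ τ - 1 - τ * t)| := by rw [hε2]
    _ ≤ |α * (L - t)| + |C * b n ^ τ * ((1 + t) ^ τ - 1 - τ * t)| := abs_sub _ _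
    _ = α * |L - t| + C * b n ^ τ * |(1 + t) ^ τ - 1 - τ * t| := by
        rw [abs_mul, abs_mul, abs_of_pos hα, abs_of_nonneg hCb0]
    _ ≤ α * (2 * t ^ 2) + C * b n ^ τ * ((4 * τ ^ 2 + 2 * τ) * t ^ 2) :=
        add_le_add (mul_le_mul_of_nonneg_left hLsub hα.le)
          (mul_le_mul_of_nonneg_left hPbound hCb0)
    _ ≤ A / b n ^ τ := by
        have h5 := mul_le_mul_of_nonneg_left ht2a (by positivity : (0:ℝ) ≤ 2 * α)
        have h6 : C * b n ^ τ * ((4 * τ ^ 2 + 2 * τ) * t ^ 2)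
            = C * (4 * τ ^ 2 + 2 * τ) * (b n ^ τ * t ^ 2) := by ring
        have h7 := mul_le_mul_of_nonneg_left htb (by positivity : (0:ℝ) ≤ C * (4 * τ ^ 2 + 2 * τ))
        linarith
  have hε1 : |ε| ≤ 1 := hεbound.trans ((div_le_one hbτpos).2 hbτA)
  have hεlog : |ε| ≤ A * C / Real.log n := by
    refine hεbound.trans ?_
    calc A / b n ^ τ = A * (1 / b n ^ τ) := by rw [mul_one_div]
    _ ≤ A * (C / Real.log n) := mul_le_mul_of_nonneg_left hinvbτ hA0
    _ = A * C / Real.log n := by rw [mul_div_assoc]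
  -- the argument u = b n * (1 + t)
  have hu : a n * x + b n = b n * (1 + t) := by rw [ha_eq, ht_def]; ring
  have hu2 : b n * (1 / 2) ≤ b n * (1 + t) :=
    mul_le_mul_of_nonneg_left (by linarith [(abs_le.1 ht_half).1]) hb0.le
  have hux₁ : x₁ ≤ b n * (1 + t) := by linarith [hu2, hb2x]
  have hupos : 0 < b n * (1 + t) := mul_pos hb0 h1t
  obtain ⟨y, hy_def⟩ : ∃ y : ℝ,
      y = K * (b n * (1 + t)) ^ α * Real.exp (-C * (b n * (1 + t)) ^ τ) := ⟨_, rfl⟩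
  have hypos : 0 < y := by
    rw [hy_def]
    have h1 := Real.rpow_pos_of_pos hupos α
    positivity
  have hlogu : Real.log (b n * (1 + t)) = Real.log (b n) + L := by
    rw [Real.log_mul hb0.ne' h1t.ne', hL_def]
  have huτ : (b n * (1 + t)) ^ τ = b n ^ τ * (1 + t) ^ τ := Real.mul_rpow hb0.le h1t.le
  have hylog : Real.log y = -Real.log n + (ε - x) := by
    rw [hy_def, Real.log_mul (by positivity) (Real.exp_ne_zero _),
      Real.log_mul hK.ne' (by positivity), Real.log_rpow hupos, Real.log_exp, hlogu, huτ, hε_def]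
    linear_combination hlogeq
  have hy_eq : y = Real.exp (ε - x) / n := by
    rw [← Real.exp_log hypos, hylog, Real.exp_add, Real.exp_neg, Real.exp_log hn0]; ring
  have hny : (n : ℝ) * y = Real.exp (ε - x) := by
    rw [hy_eq]; field_simp
  have hεx : ε - x ≤ 1 + |x| := by
    have h1 := abs_le.1 hε1
    linarith [neg_abs_le x, h1.2]
  have hyle : y ≤ Real.exp (1 + |x|) / n := by
    rw [hy_eq]
    have h1 : Real.exp (ε - x) ≤ Real.exp (1 + |x|) := Real.exp_le_exp.2 hεx
    exact div_le_div_of_nonneg_right h1 hn0.le |>.trans_eq rfl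
  have hy_half : y ≤ 1 / 2 := by
    refine hyle.trans ?_
    rw [div_le_div_iff₀ hn0 two_pos]; linarith
  have hFu : F (b n * (1 + t)) = 1 - y := by rw [hF _ hux₁, hy_def]
  have h1y : 0 < 1 - y := by linarith
  have hFn : F (b n * (1 + t)) ^ n = Real.exp (n * Real.log (1 - y)) := by
    rw [hFu, Real.exp_nat_mul, Real.exp_log h1y]
  have hlog1y : |Real.log (1 - y) + y| ≤ 2 * y ^ 2 := by
    have h := Real.abs_log_sub_add_sum_range_le (x := y)
      (by rw [abs_of_pos hypos]; linarith) 1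
    have hsum : (∑ i ∈ Finset.range 1, y ^ (i + 1) / ((i : ℝ) + 1)) = y := by
      rw [Finset.sum_range_one]; norm_num
    rw [hsum, abs_of_pos hypos] at h
    have h2 : y ^ 2 / (1 - y) ≤ 2 * y ^ 2 := by
      rw [div_le_iff₀ h1y]
      have h3 := mul_le_mul_of_nonneg_left hy_half (sq_nonneg y)
      linarith
    calc |Real.log (1 - y) + y| = |y + Real.log (1 - y)| := by rw [add_comm]
    _ ≤ y ^ 2 / (1 - y) := h
    _ ≤ 2 * y ^ 2 := h2
  obtain ⟨δ, hδ_def⟩ : ∃ δ : ℝ, δ = (n : ℝ) * Real.log (1 - y) + Real.exp (-x) := ⟨_, rfl⟩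
  have hexpsub : Real.exp (ε - x) = Real.exp (-x) * Real.exp ε := by
    rw [← Real.exp_add]; ring_nf
  have hδ_eq : δ = (n : ℝ) * (Real.log (1 - y) + y) - Real.exp (-x) * (Real.exp ε - 1) := by
    have h1 := hny
    rw [hexpsub] at h1
    rw [hδ_def]; linear_combination -h1
  have hlogle_n : Real.log n ≤ (n : ℝ) := by
    have := Real.log_le_sub_one_of_pos hn0; linarith
  have hterm1 : |(n : ℝ) * (Real.log (1 - y) + y)|
      ≤ 2 * Real.exp (2 + 2 * |x|) / Real.log n := by
    rw [abs_mul, abs_of_nonneg (Nat.cast_nonneg n)]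
    have he : Real.exp (1 + |x|) * Real.exp (1 + |x|) = Real.exp (2 + 2 * |x|) := by
      rw [← Real.exp_add]; ring_nf
    calc (n : ℝ) * |Real.log (1 - y) + y| ≤ (n : ℝ) * (2 * y ^ 2) :=
        mul_le_mul_of_nonneg_left hlog1y hn0.le
    _ = 2 * (((n : ℝ) * y) * y) := by ring
    _ ≤ 2 * (Real.exp (1 + |x|) * (Real.exp (1 + |x|) / n)) := by
        have h1 : (n : ℝ) * y ≤ Real.exp (1 + |x|) := by
          rw [hny]; exact Real.exp_le_exp.2 hεx
        have h2 := mul_le_mul h1 hyle hypos.le (Real.exp_pos _).le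
        linarith
    _ = 2 * Real.exp (2 + 2 * |x|) / n := by
        rw [show 2 * (Real.exp (1 + |x|) * (Real.exp (1 + |x|) / (n:ℝ)))
          = 2 * (Real.exp (1 + |x|) * Real.exp (1 + |x|)) / n by ring, he]
    _ ≤ 2 * Real.exp (2 + 2 * |x|) / Real.log n := by
        rw [div_le_div_iff₀ hn0 hlogn0]
        exact mul_le_mul_of_nonneg_left hlogle_n (by positivity)
  have hterm2 : |Real.exp (-x) * (Real.exp ε - 1)|
      ≤ 2 * Real.exp (-x) * (A * C) / Real.log n := by
    rw [abs_mul, abs_of_pos (Real.exp_pos _)]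
    have h1 : |Real.exp ε - 1| ≤ 2 * |ε| := Real.abs_exp_sub_one_le hε1
    have h2 : Real.exp (-x) * |Real.exp ε - 1| ≤ Real.exp (-x) * (2 * (A * C / Real.log n)) := by
      refine mul_le_mul_of_nonneg_left ?_ (Real.exp_pos _).le
      linarith [hεlog, h1]
    calc Real.exp (-x) * |Real.exp ε - 1|
        ≤ Real.exp (-x) * (2 * (A * C / Real.log n)) := h2
    _ = 2 * Real.exp (-x) * (A * C) / Real.log n := by ring
  have hδB : |δ| ≤ B / Real.log n := by
    rw [hδ_eq]
    calc |(n : ℝ) * (Real.log (1 - y) + y) - Real.exp (-x) * (Real.exp ε - 1)|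
        ≤ |(n : ℝ) * (Real.log (1 - y) + y)| + |Real.exp (-x) * (Real.exp ε - 1)| := abs_sub _ _
    _ ≤ 2 * Real.exp (2 + 2 * |x|) / Real.log n + 2 * Real.exp (-x) * (A * C) / Real.log n :=
        add_le_add hterm1 hterm2
    _ = B / Real.log n := by rw [hB_def]; ring
  have hδ1 : |δ| ≤ 1 := by
    refine hδB.trans ?_
    rw [div_le_one hlogn0]; linarith
  have hexpδ : |Real.exp δ - 1| ≤ 2 * |δ| := Real.abs_exp_sub_one_le hδ1
  have hfinal : F (b n * (1 + t)) ^ n = Real.exp (-Real.exp (-x)) * Real.exp δ := by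
    rw [hFn, ← Real.exp_add]
    congr 1
    rw [hδ_def]; ring
  rw [hu, hfinal]
  have hΛpos : 0 < Real.exp (-Real.exp (-x)) := Real.exp_pos _
  calc |Real.exp (-Real.exp (-x)) * Real.exp δ - Real.exp (-Real.exp (-x))|
      = Real.exp (-Real.exp (-x)) * |Real.exp δ - 1| := by
        rw [show Real.exp (-Real.exp (-x)) * Real.exp δ - Real.exp (-Real.exp (-x))
          = Real.exp (-Real.exp (-x)) * (Real.exp δ - 1) by ring, abs_mul, abs_of_pos hΛpos]
  _ ≤ Real.exp (-Real.exp (-x)) * (2 * (B / Real.log n)) := by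
      refine mul_le_mul_of_nonneg_left ?_ hΛpos.le
      linarith [hexpδ, hδB]
  _ = 2 * B * Real.exp (-Real.exp (-x)) / Real.log n := by ring
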